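/- For all integers 0 ≤ r ≤ s, one has Σ_{v=0}^{r} (4^{v} / C(2v,v)) · C(r,v) · C(s−r,v) = C(2s,2r) / C(s,r), as an identity of rational numbers. -/

import Mathlib

open Finset

noncomputable def tq (v : ℕ) : ℚ := 4^v / ((2*v).choose v : ℚ)

noncomputable def Fq (r m : ℕ) : ℚ :=
  ∑ v ∈ Finset.range (r+1), tq v * (r.choose v : ℚ) * (m.choose v : ℚ)

lemma cb_ne (v : ℕ) : (((2*v).choose v : ℕ) : ℚ) ≠ 0 :=
  Nat.cast_ne_zero.mpr (Nat.choose_pos (by omega)).ne'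

-- pointwise Zeilberger certificate
lemma key (r m w : ℕ) :
    (2*(m:ℚ)) * tq w * (r.choose w : ℚ) * (m.choose w : ℚ)
      - (2*(r:ℚ)+1) * tq (w+1) * (r.choose w : ℚ) * (m.choose (w+1) : ℚ)
    = 2 * ((w:ℚ) * tq w * (r.choose w : ℚ) * (m.choose w : ℚ))
      - 2 * (((w:ℚ)+1) * tq (w+1) * (r.choose (w+1) : ℚ) * (m.choose (w+1) : ℚ)) := by
  have ha : (((2*w).choose w : ℕ) : ℚ) ≠ 0 := cb_ne w
  have hb : (((2*(w+1)).choose (w+1) : ℕ) : ℚ) ≠ 0 := cb_ne (w+1)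
  have hw1 : ((w:ℚ)+1) ≠ 0 := by positivity
  have h2w1 : (2*(w:ℚ)+1) ≠ 0 := by positivity
  have hcb : ((w:ℚ)+1) * (((2*(w+1)).choose (w+1) : ℕ) : ℚ)
      = 2*(2*(w:ℚ)+1) * (((2*w).choose w : ℕ) : ℚ) := by
    have h2 : (w+1) * ((2*(w+1)).choose (w+1)) = 2*(2*w+1) * ((2*w).choose w) := by
      simpa [Nat.centralBinom] using Nat.succ_mul_centralBinom_succ w
    exact_mod_cast congrArg (Nat.cast : ℕ → ℚ) h2
  by_cases hm : w ≤ m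
  · by_cases hr : w ≤ r
    · have hcm : ((m.choose (w+1) : ℕ) : ℚ) * ((w:ℚ)+1)
          = (m.choose w : ℚ) * ((m:ℚ) - (w:ℚ)) := by
        have h2 : ((m.choose (w+1) * (w+1) : ℕ) : ℚ) = ((m.choose w * (m - w) : ℕ) : ℚ) :=
          congrArg (Nat.cast : ℕ → ℚ) (Nat.choose_succ_right_eq m w)
        push_cast [Nat.cast_sub hm] at h2
        linarith [h2]
      have hcr : ((r.choose (w+1) : ℕ) : ℚ) * ((w:ℚ)+1)
          = (r.choose w : ℚ) * ((r:ℚ) - (w:ℚ)) := by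
        have h2 : ((r.choose (w+1) * (w+1) : ℕ) : ℚ) = ((r.choose w * (r - w) : ℕ) : ℚ) :=
          congrArg (Nat.cast : ℕ → ℚ) (Nat.choose_succ_right_eq r w)
        push_cast [Nat.cast_sub hr] at h2
        linarith [h2]
      simp only [tq]
      have eb : (((2*(w+1)).choose (w+1) : ℕ) : ℚ)
          = 2*(2*(w:ℚ)+1) * (((2*w).choose w : ℕ) : ℚ) / ((w:ℚ)+1) := by
        field_simp; linarith [hcb]
      have ecm : ((m.choose (w+1) : ℕ) : ℚ)
          = (m.choose w : ℚ) * ((m:ℚ) - (w:ℚ)) / ((w:ℚ)+1) := by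
        field_simp; linarith [hcm]
      have ecr : ((r.choose (w+1) : ℕ) : ℚ)
          = (r.choose w : ℚ) * ((r:ℚ) - (w:ℚ)) / ((w:ℚ)+1) := by
        field_simp; linarith [hcr]
      rw [eb, ecm, ecr]
      field_simp
      ring
    · push_neg at hr
      have h1 : r.choose w = 0 := Nat.choose_eq_zero_of_lt hr
      have h2 : r.choose (w+1) = 0 := Nat.choose_eq_zero_of_lt (by omega)
      simp [h1, h2]
  · push_neg at hm
    have h1 : m.choose w = 0 := Nat.choose_eq_zero_of_lt hm
    have h2 : m.choose (w+1) = 0 := Nat.choose_eq_zero_of_lt (by omega)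
    simp [h1, h2]

lemma tele (r m : ℕ) :
    (2*(m:ℚ)) * Fq r m
      = (2*(r:ℚ)+1) * ∑ w ∈ Finset.range (r+1),
          tq (w+1) * (r.choose w : ℚ) * (m.choose (w+1) : ℚ) := by
  have h : ∑ w ∈ Finset.range (r+1),
      ((2*(m:ℚ)) * tq w * (r.choose w : ℚ) * (m.choose w : ℚ)
        - (2*(r:ℚ)+1) * tq (w+1) * (r.choose w : ℚ) * (m.choose (w+1) : ℚ)) = 0 := by
    have := Finset.sum_range_sub'
      (fun w => 2 * ((w:ℚ) * tq w * (r.choose w : ℚ) * (m.choose w : ℚ))) (r+1)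
    push_cast at this
    rw [Finset.sum_congr rfl (fun w _ => key r m w), this]
    simp [Nat.choose_eq_zero_of_lt (Nat.lt_succ_self r)]
  rw [Finset.sum_sub_distrib] at h
  have h2 : (2*(m:ℚ)) * Fq r m
      = ∑ w ∈ Finset.range (r+1), (2*(m:ℚ)) * tq w * (r.choose w : ℚ) * (m.choose w : ℚ) := by
    rw [Fq, Finset.mul_sum]; exact Finset.sum_congr rfl (fun w _ => by ring)
  have h3 : (2*(r:ℚ)+1) * ∑ w ∈ Finset.range (r+1),
        tq (w+1) * (r.choose w : ℚ) * (m.choose (w+1) : ℚ)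
      = ∑ w ∈ Finset.range (r+1),
        (2*(r:ℚ)+1) * tq (w+1) * (r.choose w : ℚ) * (m.choose (w+1) : ℚ) := by
    rw [Finset.mul_sum]; exact Finset.sum_congr rfl (fun w _ => by ring)
  rw [h2, h3]; linarith [h]

lemma F_rec (r m : ℕ) :
    (2*(r:ℚ)+1) * Fq (r+1) m = (2*((r:ℚ)+(m:ℚ))+1) * Fq r m := by
  have hsplit : Fq (r+1) m
      = (∑ w ∈ Finset.range (r+1), tq (w+1) * (r.choose w : ℚ) * (m.choose (w+1) : ℚ))
        + (∑ w ∈ Finset.range (r+1), tq (w+1) * (r.choose (w+1) : ℚ) * (m.choose (w+1) : ℚ))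
        + 1 := by
    rw [Fq, Finset.sum_range_succ' (fun v => tq v * ((r+1).choose v : ℚ) * (m.choose v : ℚ))]
    have : ∀ w, tq (w+1) * (((r+1).choose (w+1) : ℕ) : ℚ) * (m.choose (w+1) : ℚ)
        = tq (w+1) * (r.choose w : ℚ) * (m.choose (w+1) : ℚ)
          + tq (w+1) * (r.choose (w+1) : ℚ) * (m.choose (w+1) : ℚ) := by
      intro w
      rw [Nat.choose_succ_succ]
      push_cast
      ring
    rw [Finset.sum_congr rfl (fun w _ => this w), Finset.sum_add_distrib]
    simp [tq]
  have hS2 : (∑ w ∈ Finset.range (r+1), tq (w+1) * (r.choose (w+1) : ℚ) * (m.choose (w+1) : ℚ))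
      + 1 = Fq r m := by
    rw [Fq, Finset.sum_range_succ' (fun v => tq v * (r.choose v : ℚ) * (m.choose v : ℚ))]
    rw [Finset.sum_range_succ]
    simp [tq, Nat.choose_eq_zero_of_lt (Nat.lt_succ_self r)]
  have ht := tele r m
  rw [hsplit]
  nlinarith [ht, hS2]

noncomputable def Gq (r m : ℕ) : ℚ :=
  ((2*(r+m)).choose (2*r) : ℚ) / ((r+m).choose r : ℚ)

lemma G_rec (r m : ℕ) :
    (2*(r:ℚ)+1) * Gq (r+1) m = (2*((r:ℚ)+(m:ℚ))+1) * Gq r m := by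
  set n := r + m with hn
  have hrn : r ≤ n := Nat.le_add_right r m
  have e1 : r + 1 + m = n + 1 := by omega
  have hden1 : ((n.choose r : ℕ) : ℚ) ≠ 0 :=
    Nat.cast_ne_zero.mpr (Nat.choose_pos hrn).ne'
  have hden2 : (((n+1).choose (r+1) : ℕ) : ℚ) ≠ 0 :=
    Nat.cast_ne_zero.mpr (Nat.choose_pos (by omega)).ne'
  have h1 : (2*(n:ℕ)+2) * ((2*n+1) * ((2*n).choose (2*r)))
      = ((2*n+2).choose (2*r+2)) * ((2*r+2) * (2*r+1)) := by
    have a1 := Nat.add_one_mul_choose_eq (2*n) (2*r)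
    have a2 := Nat.add_one_mul_choose_eq (2*n+1) (2*r+1)
    calc (2*n+2) * ((2*n+1) * ((2*n).choose (2*r)))
        = (2*n+2) * ((2*n+1).choose (2*r+1) * (2*r+1)) := by rw [a1]
      _ = ((2*n+1+1) * (2*n+1).choose (2*r+1)) * (2*r+1) := by ring
      _ = ((2*n+2).choose (2*r+2) * (2*r+2)) * (2*r+1) := by rw [a2]
      _ = _ := by ring
  have h2 : (n+1) * (n.choose r) = (n+1).choose (r+1) * (r+1) :=
    Nat.add_one_mul_choose_eq n r
  have h1q : (2*(n:ℚ)+2) * ((2*(n:ℚ)+1) * (((2*n).choose (2*r) : ℕ) : ℚ))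
      = (((2*n+2).choose (2*r+2) : ℕ) : ℚ) * ((2*(r:ℚ)+2) * (2*(r:ℚ)+1)) := by
    exact_mod_cast congrArg (Nat.cast : ℕ → ℚ) h1
  have h2q : ((n:ℚ)+1) * ((n.choose r : ℕ) : ℚ)
      = (((n+1).choose (r+1) : ℕ) : ℚ) * ((r:ℚ)+1) := by
    exact_mod_cast congrArg (Nat.cast : ℕ → ℚ) h2
  have eb : (((2*n+2).choose (2*r+2) : ℕ) : ℚ)
      = (2*(n:ℚ)+2) * ((2*(n:ℚ)+1) * (((2*n).choose (2*r) : ℕ) : ℚ))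
        / ((2*(r:ℚ)+2) * (2*(r:ℚ)+1)) := by
    rw [eq_div_iff (by positivity)]; linarith [h1q]
  have ec : (((n+1).choose (r+1) : ℕ) : ℚ)
      = ((n:ℚ)+1) * ((n.choose r : ℕ) : ℚ) / ((r:ℚ)+1) := by
    rw [eq_div_iff (by positivity)]; linarith [h2q]
  have hm : (m:ℚ) = (n:ℚ) - (r:ℚ) := by
    have : (n:ℚ) = (r:ℚ) + (m:ℚ) := by exact_mod_cast congrArg (Nat.cast : ℕ → ℚ) hn
    linarith
  simp only [Gq, e1, hm, ← hn]
  have e2 : 2*(n+1) = 2*n+2 := by ring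
  have e3 : 2*(r+1) = 2*r+2 := by ring
  rw [e2, e3, eb, ec]
  field_simp
  ring

lemma main_id (r m : ℕ) : Fq r m = Gq r m := by
  induction r with
  | zero => simp [Fq, Gq, tq]
  | succ r ih =>
    have h2r : (2*(r:ℚ)+1) ≠ 0 := by positivity
    have := F_rec r m
    rw [ih, ← G_rec r m] at this
    exact mul_left_cancel₀ h2r this

theorem stmt_13 (r s : ℕ) (hrs : r ≤ s) :
    ∑ v ∈ Finset.range (r+1),
        ((4:ℚ)^v / ((2*v).choose v : ℚ)) * (r.choose v : ℚ) * ((s-r).choose v : ℚ)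
      = ((2*s).choose (2*r) : ℚ) / (s.choose r : ℚ) := by
  have h : r + (s - r) = s := by omega
  have := main_id r (s - r)
  simp only [Fq, Gq, tq, h] at this
  exact this
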